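/- arXiv:0906.2547 — 8 statements merged into one kernel-verified Lean document; each statement's English description precedes it below -/
import Mathlib

section
/- If ρ_{AB} is the Choi matrix of a linear map E, then the Choi matrix of the composite map N = E* ∘ E is σ_{AA'} = Tr_B[(ρ_{AB} ⊗ I_{A'}) · (I_A ⊗ conj(ρ)_{BA'}^{T_B})], where conj(ρ)_{BA'} denotes the entrywise complex conjugate of ρ with its tensor factors swapped, and T_B is partial transpose on the B factor. -/
open Matrix
open scoped ComplexConjugate

/-- The (standard) Choi–Jamiołkowski matrix of a linear map
`E : M_{dA}(ℂ) → M_{dB}(ℂ)`; it satisfies `E(X) = Tr_A[ρ_{AB} · (Xᵀ ⊗ I)]`. -/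
def choi {dA dB : ℕ} (E : Matrix (Fin dA) (Fin dA) ℂ →ₗ[ℂ] Matrix (Fin dB) (Fin dB) ℂ) :
    Matrix (Fin dA × Fin dB) (Fin dA × Fin dB) ℂ :=
  Matrix.of fun p q => E (Matrix.single p.1 q.1 1) p.2 q.2

/-- `conj(ρ)_{BA'}`: the entrywise complex conjugate of `ρ_{AB}` with its two tensor
factors swapped. -/
def conjSwap {dA dB : ℕ} (ρ : Matrix (Fin dA × Fin dB) (Fin dA × Fin dB) ℂ) :
    Matrix (Fin dB × Fin dA) (Fin dB × Fin dA) ℂ :=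
  Matrix.of fun p q => conj (ρ (p.2, p.1) (q.2, q.1))

/-- Partial transpose on the first (`B`) tensor factor of a matrix on `B ⊗ A'`. -/
def ptFirst {dB dA : ℕ} (M : Matrix (Fin dB × Fin dA) (Fin dB × Fin dA) ℂ) :
    Matrix (Fin dB × Fin dA) (Fin dB × Fin dA) ℂ :=
  Matrix.of fun p q => M (q.1, p.2) (p.1, q.2)

/-- `Tr_B[(ρ_{AB} ⊗ I_{A'}) · (I_A ⊗ M_{BA'})]`, the partial trace over `B` of the
product of `ρ_{AB} ⊗ I_{A'}` and `I_A ⊗ M_{BA'}`, as a matrix on `A ⊗ A'`. -/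
noncomputable def trBProd {dA dB : ℕ} (ρ : Matrix (Fin dA × Fin dB) (Fin dA × Fin dB) ℂ)
    (M : Matrix (Fin dB × Fin dA) (Fin dB × Fin dA) ℂ) :
    Matrix (Fin dA × Fin dA) (Fin dA × Fin dA) ℂ :=
  Matrix.of fun p q => ∑ k, ∑ l, ρ (p.1, k) (q.1, l) * M (l, p.2) (k, q.2)

lemma trace_conjTranspose_mul_std {n : ℕ} (M : Matrix (Fin n) (Fin n) ℂ) (i j : Fin n) :
    (Mᴴ * Matrix.single i j 1).trace = conj (M i j) := by
  simp [Matrix.trace, Matrix.mul_apply, Matrix.single, Matrix.diag,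
    Finset.mul_sum]
  rw [Finset.sum_comm]
  simp [ite_and, Finset.sum_ite_eq]

/-- If `ρ_{AB}` is the Choi matrix of a linear map `E`, then the Choi matrix of the
composite `N = E* ∘ E` is `σ_{AA'} = Tr_B[(ρ_{AB} ⊗ I_{A'}) · (I_A ⊗ conj(ρ)_{BA'}^{T_B})]`. -/
theorem choi_comp_adjoint {dA dB : ℕ}
    (E : Matrix (Fin dA) (Fin dA) ℂ →ₗ[ℂ] Matrix (Fin dB) (Fin dB) ℂ)
    (Estar : Matrix (Fin dB) (Fin dB) ℂ →ₗ[ℂ] Matrix (Fin dA) (Fin dA) ℂ)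
    (hadj : ∀ (A : Matrix (Fin dB) (Fin dB) ℂ) (B : Matrix (Fin dA) (Fin dA) ℂ),
      (Aᴴ * E B).trace = ((Estar A)ᴴ * B).trace) :
    choi (Estar ∘ₗ E) = trBProd (choi E) (ptFirst (conjSwap (choi E))) := by
  ext ⟨a, a2⟩ ⟨c, c2⟩
  have key := hadj (E (Matrix.single a c 1)) (Matrix.single a2 c2 1)
  rw [trace_conjTranspose_mul_std] at key
  have h1 : Estar (E (Matrix.single a c 1)) a2 c2
      = conj ((E (Matrix.single a c 1))ᴴ * E (Matrix.single a2 c2 1)).trace := by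
    rw [key, Complex.conj_conj]
  show (Estar ∘ₗ E) (Matrix.single a c 1) a2 c2 = _
  rw [LinearMap.comp_apply, h1]
  simp only [trBProd, ptFirst, conjSwap, choi, Matrix.of_apply, Matrix.trace,
    Matrix.mul_apply, Matrix.conjTranspose_apply, Matrix.diag, map_sum]
  rw [Finset.sum_comm]
  refine Finset.sum_congr rfl fun k _ => Finset.sum_congr rfl fun l _ => ?_
  rw [RingHom.map_mul]
  simp [mul_comm]
end

section
/- The Choi matrix σ_{AA'} of a conjugate-divisible map N = E* ∘ E (E a quantum channel) is invariant under the flip operation: Swap · conj(σ_{AA'}) · Swap = σ_{AA'}. -/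
open Matrix
open scoped ComplexConjugate ComplexOrder

/-- The flip operation `Flip(σ) = Swap · conj(σ) · Swap` on a matrix on
`ℂ^{d_A} ⊗ ℂ^{d_A}`. -/
def flipMat {dA : ℕ} (σ : Matrix (Fin dA × Fin dA) (Fin dA × Fin dA) ℂ) :
    Matrix (Fin dA × Fin dA) (Fin dA × Fin dA) ℂ :=
  Matrix.of fun p q => conj (σ (p.2, p.1) (q.2, q.1))


lemma estar_apply {dA dB : ℕ}
    (E : Matrix (Fin dA) (Fin dA) ℂ →ₗ[ℂ] Matrix (Fin dB) (Fin dB) ℂ)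
    (Estar : Matrix (Fin dB) (Fin dB) ℂ →ₗ[ℂ] Matrix (Fin dA) (Fin dA) ℂ)
    (hadj : ∀ (A : Matrix (Fin dB) (Fin dB) ℂ) (B : Matrix (Fin dA) (Fin dA) ℂ),
      (Aᴴ * E B).trace = ((Estar A)ᴴ * B).trace)
    (A : Matrix (Fin dB) (Fin dB) ℂ) (j l : Fin dA) :
      Estar A j l = ∑ p, ∑ q, A p q * conj (E (Matrix.single j l 1) p q) := by
  have h := hadj A (Matrix.single j l 1)
  simp [Matrix.trace, Matrix.mul_apply, Matrix.single, conjTranspose_apply,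
    Matrix.diag, Finset.mul_sum, Finset.sum_ite_eq, mul_comm] at h
  have h2 : (∑ x : Fin dA, ∑ x_1 : Fin dA,
      if j = x_1 ∧ l = x then (starRingEnd ℂ) (Estar A x_1 x) else 0)
      = (starRingEnd ℂ) (Estar A j l) := by
    simp [ite_and, Finset.sum_ite_eq]
  rw [h2] at h
  have h3 := congrArg (starRingEnd ℂ) h.symm
  rw [Finset.sum_comm]
  simpa [map_sum, mul_comm, Matrix.single] using h3

/-- The Choi matrix `σ_{AA'}` of a conjugate-divisible map `N = E* ∘ E` (`E` a quantum
channel, i.e. completely positive and trace-preserving, with `E*` its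
Hilbert–Schmidt adjoint) is invariant under the flip operation:
`Swap · conj(σ_{AA'}) · Swap = σ_{AA'}`. -/
theorem flipMat_choi_comp_adjoint {dA dB : ℕ}
    (E : Matrix (Fin dA) (Fin dA) ℂ →ₗ[ℂ] Matrix (Fin dB) (Fin dB) ℂ)
    (Estar : Matrix (Fin dB) (Fin dB) ℂ →ₗ[ℂ] Matrix (Fin dA) (Fin dA) ℂ)
    (hadj : ∀ (A : Matrix (Fin dB) (Fin dB) ℂ) (B : Matrix (Fin dA) (Fin dA) ℂ),
      (Aᴴ * E B).trace = ((Estar A)ᴴ * B).trace)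
    (hcp : (choi E).PosSemidef)
    (htp : ∀ X : Matrix (Fin dA) (Fin dA) ℂ, (E X).trace = X.trace) :
    flipMat (choi (Estar ∘ₗ E)) = choi (Estar ∘ₗ E) := by
  ext ⟨i, j⟩ ⟨k, l⟩
  simp only [flipMat, choi, Matrix.of_apply, LinearMap.comp_apply]
  rw [estar_apply E Estar hadj, estar_apply E Estar hadj]
  simp [map_sum, mul_comm]
end

section
/- Let σ_{AA'} be the Choi matrix of N = E* ∘ E for a CPT map E. Then the support of σ_{AA'} is a positive-semidefinite subspace: the corresponding matrix subspace M(supp(σ)) admits a spanning set consisting of positive-semidefinite matrices. -/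
open Matrix
open scoped ComplexConjugate ComplexOrder

/-- The coefficient-matrix isomorphism `ψ ↦ M(ψ)`, sending a vector
`ψ = Σ_{ij} M_{ij} e_i ⊗ e_j ∈ ℂ^{d_A} ⊗ ℂ^{d_A}` to its coefficient matrix. -/
def vecToMat {dA : ℕ} : ((Fin dA × Fin dA) → ℂ) →ₗ[ℂ] Matrix (Fin dA) (Fin dA) ℂ where
  toFun v := Matrix.of fun i j => v (i, j)
  map_add' _ _ := rfl
  map_smul' _ _ := rfl

lemma sum4_swap {α β : Type*} [Fintype α] [Fintype β] (f : α → α → β → β → ℂ) :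
    ∑ p : β, ∑ q : β, ∑ a : α, ∑ b : α, f a b p q
      = ∑ a : α, ∑ b : α, ∑ p : β, ∑ q : β, f a b p q := by
  calc ∑ p : β, ∑ q : β, ∑ a : α, ∑ b : α, f a b p q
      = ∑ p : β, ∑ a : α, ∑ q : β, ∑ b : α, f a b p q :=
        Finset.sum_congr rfl fun p _ => by rw [Finset.sum_comm]
    _ = ∑ p : β, ∑ a : α, ∑ b : α, ∑ q : β, f a b p q :=
        Finset.sum_congr rfl fun p _ => Finset.sum_congr rfl fun a _ => by rw [Finset.sum_comm]
    _ = ∑ a : α, ∑ p : β, ∑ b : α, ∑ q : β, f a b p q := by rw [Finset.sum_comm]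
    _ = ∑ a : α, ∑ b : α, ∑ p : β, ∑ q : β, f a b p q :=
        Finset.sum_congr rfl fun a _ => by rw [Finset.sum_comm]


variable {dA dB : ℕ}
  (E : Matrix (Fin dA) (Fin dA) ℂ →ₗ[ℂ] Matrix (Fin dB) (Fin dB) ℂ)
  (Estar : Matrix (Fin dB) (Fin dB) ℂ →ₗ[ℂ] Matrix (Fin dA) (Fin dA) ℂ)
  (B : Matrix (Fin dA × Fin dB) (Fin dA × Fin dB) ℂ)

lemma entry_formula {dA dB : ℕ}
    (E : Matrix (Fin dA) (Fin dA) ℂ →ₗ[ℂ] Matrix (Fin dB) (Fin dB) ℂ)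
    (Estar : Matrix (Fin dB) (Fin dB) ℂ →ₗ[ℂ] Matrix (Fin dA) (Fin dA) ℂ)
    (B : Matrix (Fin dA × Fin dB) (Fin dA × Fin dB) ℂ)
    (hadj : ∀ (A : Matrix (Fin dB) (Fin dB) ℂ) (B : Matrix (Fin dA) (Fin dA) ℂ),
      (Aᴴ * E B).trace = ((Estar A)ᴴ * B).trace)
    (hB : choi E = Bᴴ * B) (i k j l : Fin dA) :
    choi (Estar ∘ₗ E) (i, k) (j, l) =
      ∑ a : Fin dA × Fin dB, ∑ b : Fin dA × Fin dB,
        (∑ p, conj (B a (i, p)) * B b (k, p)) * conj (∑ q, conj (B a (j, q)) * B b (l, q)) := by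
  have hstar : ∀ (A : Matrix (Fin dB) (Fin dB) ℂ) (k l : Fin dA),
      Estar A k l = conj ((Aᴴ * E (Matrix.single k l 1)).trace) := by
    intro A k l
    have h := (hadj A (Matrix.single k l 1)).symm
    have h2 : ((Estar A)ᴴ * Matrix.single k l 1).trace = conj (Estar A k l) := by
      simp [Matrix.trace, Matrix.mul_apply, Matrix.single, Matrix.diag,
        Matrix.conjTranspose_apply, ite_and]
    rw [h2] at h
    rw [← h, Complex.conj_conj]
  have hτ : ∀ (i j : Fin dA) (p q : Fin dB),
      E (Matrix.single i j 1) p q = ∑ a, conj (B a (i, p)) * B a (j, q) := by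
    intro i j p q
    have : choi E (i, p) (j, q) = (Bᴴ * B) (i, p) (j, q) := by rw [hB]
    simpa [choi, Matrix.mul_apply, Matrix.conjTranspose_apply] using this
  have h0 : choi (Estar ∘ₗ E) (i, k) (j, l)
      = Estar (E (Matrix.single i j 1)) k l := rfl
  rw [h0, hstar]
  have htr : ((E (Matrix.single i j 1))ᴴ * E (Matrix.single k l 1)).trace
      = ∑ p : Fin dB, ∑ q : Fin dB,
          conj (E (Matrix.single i j 1) q p) * E (Matrix.single k l 1) q p := by
    simp [Matrix.trace, Matrix.mul_apply, Matrix.conjTranspose_apply, Matrix.diag]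
  rw [htr]
  calc conj (∑ p : Fin dB, ∑ q : Fin dB,
        conj (E (Matrix.single i j 1) q p) * E (Matrix.single k l 1) q p)
      = ∑ p : Fin dB, ∑ q : Fin dB,
        E (Matrix.single i j 1) q p * conj (E (Matrix.single k l 1) q p) := by
        simp only [map_sum, _root_.map_mul, Complex.conj_conj]
    _ = ∑ p : Fin dB, ∑ q : Fin dB,
          ∑ a : Fin dA × Fin dB, ∑ b : Fin dA × Fin dB,
            (conj (B a (i, q)) * B b (k, q)) * (B a (j, p) * conj (B b (l, p))) := by
        refine Finset.sum_congr rfl fun p _ => Finset.sum_congr rfl fun q _ => ?_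
        rw [hτ, hτ, map_sum, Finset.sum_mul_sum]
        refine Finset.sum_congr rfl fun a _ => Finset.sum_congr rfl fun b _ => ?_
        simp only [_root_.map_mul, Complex.conj_conj]
        ring
    _ = ∑ a : Fin dA × Fin dB, ∑ b : Fin dA × Fin dB,
          ∑ p : Fin dB, ∑ q : Fin dB,
            (conj (B a (i, q)) * B b (k, q)) * (B a (j, p) * conj (B b (l, p))) :=
        sum4_swap _
    _ = ∑ a : Fin dA × Fin dB, ∑ b : Fin dA × Fin dB,
        (∑ p, conj (B a (i, p)) * B b (k, p)) * conj (∑ q, conj (B a (j, q)) * B b (l, q)) := by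
        refine Finset.sum_congr rfl fun a _ => Finset.sum_congr rfl fun b _ => ?_
        rw [Finset.sum_comm, map_sum, Finset.sum_mul_sum]
        refine Finset.sum_congr rfl fun p _ => Finset.sum_congr rfl fun q _ => ?_
        simp only [_root_.map_mul, Complex.conj_conj]


lemma range_mulVecLin_eq_span {ι κ : Type*} [Fintype ι] [Fintype κ] [DecidableEq ι]
    (σ : Matrix ι ι ℂ) (w : κ → ι → ℂ)
    (hσ : ∀ x y, σ x y = ∑ s, w s x * conj (w s y)) :
    LinearMap.range σ.mulVecLin = Submodule.span ℂ (Set.range w) := by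
  have hcol : ∀ x, σ.mulVec x = ∑ s, (∑ y, conj (w s y) * x y) • w s := by
    intro x; funext z
    simp only [Matrix.mulVec, dotProduct, hσ, Finset.sum_apply, Pi.smul_apply,
      smul_eq_mul, Finset.sum_mul]
    rw [Finset.sum_comm]
    exact Finset.sum_congr rfl fun s _ => Finset.sum_congr rfl fun y _ => by ring
  refine le_antisymm ?_ ?_
  · rintro _ ⟨x, rfl⟩
    rw [Matrix.mulVecLin_apply, hcol]
    exact Submodule.sum_mem _ fun s _ =>
      Submodule.smul_mem _ _ (Submodule.subset_span ⟨s, rfl⟩)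
  · -- injectivity of the restriction
    set W := Submodule.span ℂ (Set.range w) with hW
    have hmem : ∀ x, σ.mulVecLin x ∈ W := by
      intro x
      rw [Matrix.mulVecLin_apply, hcol]
      exact Submodule.sum_mem _ fun s _ =>
        Submodule.smul_mem _ _ (Submodule.subset_span ⟨s, rfl⟩)
    have hker : ∀ x ∈ W, σ.mulVec x = 0 → x = 0 := by
      intro x hx h0
      have hsum : ∑ s, conj (∑ y, conj (w s y) * x y) * (∑ y, conj (w s y) * x y) = 0 := by
        have h1 : dotProduct (star x) (σ.mulVec x) = 0 := by rw [h0]; simp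
        rw [hcol] at h1
        rw [← h1]
        calc ∑ s, conj (∑ y, conj (w s y) * x y) * (∑ y, conj (w s y) * x y)
            = ∑ s, ∑ z, conj (x z) * ((∑ y, conj (w s y) * x y) * w s z) := by
              refine Finset.sum_congr rfl fun s _ => ?_
              rw [map_sum, Finset.sum_mul]
              refine Finset.sum_congr rfl fun z _ => ?_
              simp only [_root_.map_mul, Complex.conj_conj]
              ring
          _ = ∑ z, ∑ s, conj (x z) * ((∑ y, conj (w s y) * x y) * w s z) := by
              rw [Finset.sum_comm]
          _ = dotProduct (star x) (∑ s, (∑ y, conj (w s y) * x y) • w s) := by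
              simp [dotProduct, Finset.sum_apply, Pi.smul_apply, smul_eq_mul,
                Finset.mul_sum]
      have hd : ∀ s, ∑ y, conj (w s y) * x y = 0 := by
        have hre : ∑ s, Complex.normSq (∑ y, conj (w s y) * x y) = 0 := by
          have h2 : ((∑ s, Complex.normSq (∑ y, conj (w s y) * x y) : ℝ) : ℂ) = 0 := by
            push_cast
            rw [← hsum]
            refine Finset.sum_congr rfl fun s _ => ?_
            rw [mul_comm, Complex.mul_conj]
          exact_mod_cast h2
        intro s
        have := (Finset.sum_eq_zero_iff_of_nonneg
          (fun s _ => Complex.normSq_nonneg _)).mp hre s (Finset.mem_univ s)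
        exact Complex.normSq_eq_zero.mp this
      have hvx : ∀ v, v ∈ W → dotProduct (star v) x = 0 := by
        intro v hv
        induction hv using Submodule.span_induction with
        | mem v hv => obtain ⟨s, rfl⟩ := hv; simpa [dotProduct] using hd s
        | zero => simp
        | add u v _ _ hu hv => simp [star_add, add_dotProduct, hu, hv]
        | smul c v _ hv => simp [star_smul, smul_dotProduct, hv]
      exact dotProduct_star_self_eq_zero.mp (hvx x hx)
    have hfin : FiniteDimensional ℂ W := inferInstance
    set f : W →ₗ[ℂ] W := (σ.mulVecLin).restrict (fun x _ => hmem x) with hf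
    have hinj : Function.Injective f := by
      rw [← LinearMap.ker_eq_bot, Submodule.eq_bot_iff]
      rintro ⟨x, hx⟩ hx0
      have : σ.mulVec x = 0 := by
        have := congrArg Subtype.val hx0
        simpa [hf, LinearMap.restrict_apply, Matrix.mulVecLin_apply] using this
      exact Subtype.ext (hker x hx this)
    have hsurj : Function.Surjective f := LinearMap.injective_iff_surjective.mp hinj
    intro v hv
    obtain ⟨u, hu⟩ := hsurj ⟨v, hv⟩
    have := congrArg Subtype.val hu
    exact ⟨u.1, by simpa [hf, LinearMap.restrict_apply] using this⟩

noncomputable def Rmat {dA dB : ℕ} (B : Matrix (Fin dA × Fin dB) (Fin dA × Fin dB) ℂ)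
    (a : Fin dA × Fin dB) : Matrix (Fin dB) (Fin dA) ℂ :=
  Matrix.of fun p i => B a (i, p)

noncomputable def Vmat {dA dB : ℕ} (B : Matrix (Fin dA × Fin dB) (Fin dA × Fin dB) ℂ)
    (a b : Fin dA × Fin dB) : Matrix (Fin dA) (Fin dA) ℂ :=
  (Rmat B a)ᴴ * Rmat B b

lemma Vmat_apply {dA dB : ℕ} (B : Matrix (Fin dA × Fin dB) (Fin dA × Fin dB) ℂ)
    (a b : Fin dA × Fin dB) (i k : Fin dA) :
    Vmat B a b i k = ∑ p, conj (B a (i, p)) * B b (k, p) := by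
  simp [Vmat, Rmat, Matrix.mul_apply, Matrix.conjTranspose_apply]


set_option maxHeartbeats 1600000 in
/-- Let `σ_{AA'}` be the Choi matrix of `N = E* ∘ E` for a CPT map `E`. Then the support
of `σ_{AA'}` is a positive-semidefinite subspace: the corresponding matrix subspace
`M(supp σ)` admits a spanning set of positive-semidefinite matrices. -/
theorem choi_comp_adjoint_support_posSemidef {dA dB : ℕ}
    (E : Matrix (Fin dA) (Fin dA) ℂ →ₗ[ℂ] Matrix (Fin dB) (Fin dB) ℂ)
    (Estar : Matrix (Fin dB) (Fin dB) ℂ →ₗ[ℂ] Matrix (Fin dA) (Fin dA) ℂ)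
    (hadj : ∀ (A : Matrix (Fin dB) (Fin dB) ℂ) (B : Matrix (Fin dA) (Fin dA) ℂ),
      (Aᴴ * E B).trace = ((Estar A)ᴴ * B).trace)
    (hcp : (choi E).PosSemidef)
    (htp : ∀ X : Matrix (Fin dA) (Fin dA) ℂ, (E X).trace = X.trace) :
    ∃ T : Set (Matrix (Fin dA) (Fin dA) ℂ),
      (∀ M ∈ T, M.PosSemidef) ∧
      Submodule.span ℂ T =
        Submodule.map vecToMat (LinearMap.range (choi (Estar ∘ₗ E)).mulVecLin) := by
  obtain ⟨B, hB⟩ : ∃ B : Matrix (Fin dA × Fin dB) (Fin dA × Fin dB) ℂ, choi E = Bᴴ * B := by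
    classical
    open scoped MatrixOrder in
    exact ⟨CFC.sqrt (choi E), by
      rw [(CFC.sqrt_nonneg (choi E)).posSemidef.isHermitian.eq,
        CFC.sqrt_mul_sqrt_self _ hcp.nonneg]⟩
  have hσ : ∀ x y : Fin dA × Fin dA, choi (Estar ∘ₗ E) x y =
      ∑ s : (Fin dA × Fin dB) × (Fin dA × Fin dB),
        (fun s (x : Fin dA × Fin dA) => Vmat B s.1 s.2 x.1 x.2) s x *
          conj ((fun s (x : Fin dA × Fin dA) => Vmat B s.1 s.2 x.1 x.2) s y) := by
    rintro ⟨i, k⟩ ⟨j, l⟩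
    rw [entry_formula E Estar B hadj hB i k j l]
    conv_rhs => rw [Fintype.sum_prod_type]
    refine Finset.sum_congr rfl fun a _ => Finset.sum_congr rfl fun b _ => ?_
    simp only [Vmat_apply]
  have hrange : LinearMap.range (choi (Estar ∘ₗ E)).mulVecLin = Submodule.span ℂ
      (Set.range fun s : (Fin dA × Fin dB) × (Fin dA × Fin dB) =>
        (fun (x : Fin dA × Fin dA) => Vmat B s.1 s.2 x.1 x.2)) :=
    range_mulVecLin_eq_span (ι := Fin dA × Fin dA)
      (κ := (Fin dA × Fin dB) × (Fin dA × Fin dB)) (choi (Estar ∘ₗ E))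
      (fun s (x : Fin dA × Fin dA) => Vmat B s.1 s.2 x.1 x.2) hσ
  have hSmat : Submodule.map vecToMat (LinearMap.range (choi (Estar ∘ₗ E)).mulVecLin)
      = Submodule.span ℂ
          (Set.range fun s : (Fin dA × Fin dB) × (Fin dA × Fin dB) => Vmat B s.1 s.2) := by
    rw [hrange, Submodule.map_span, ← Set.range_comp]
    congr 1
  refine ⟨{M | M ∈ Submodule.map vecToMat
      (LinearMap.range (choi (Estar ∘ₗ E)).mulVecLin) ∧ M.PosSemidef},
    fun M hM => hM.2, le_antisymm (Submodule.span_le.mpr fun M hM => hM.1) ?_⟩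
  have hmemS : ∀ a b, Vmat B a b ∈ Submodule.map vecToMat
      (LinearMap.range (choi (Estar ∘ₗ E)).mulVecLin) := by
    intro a b
    rw [hSmat]
    exact Submodule.subset_span ⟨(a, b), rfl⟩
  have hTmem : ∀ M : Matrix (Fin dA) (Fin dA) ℂ,
      M ∈ Submodule.map vecToMat (LinearMap.range (choi (Estar ∘ₗ E)).mulVecLin) →
      M.PosSemidef →
      M ∈ Submodule.span ℂ {M | M ∈ Submodule.map vecToMat
        (LinearMap.range (choi (Estar ∘ₗ E)).mulVecLin) ∧ M.PosSemidef} :=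
    fun M h1 h2 => Submodule.subset_span ⟨h1, h2⟩
  conv_lhs => rw [hSmat]
  refine Submodule.span_le.mpr ?_
  rintro _ ⟨⟨a, b⟩, rfl⟩
  simp only [SetLike.mem_coe]
  have hPexp : (Rmat B a + Rmat B b)ᴴ * (Rmat B a + Rmat B b)
      = Vmat B a a + Vmat B a b + Vmat B b a + Vmat B b b := by
    simp only [Vmat, Matrix.conjTranspose_add, Matrix.add_mul, Matrix.mul_add]
    abel
  have hQexp : (Rmat B a + Complex.I • Rmat B b)ᴴ * (Rmat B a + Complex.I • Rmat B b)
      = Vmat B a a + Complex.I • Vmat B a b + (-Complex.I) • Vmat B b a + Vmat B b b := by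
    simp only [Vmat, Matrix.conjTranspose_add, Matrix.conjTranspose_smul, Complex.star_def,
      Complex.conj_I, Matrix.add_mul, Matrix.mul_add, Matrix.smul_mul, Matrix.mul_smul]
    match_scalars <;> simp [Complex.I_sq]
  have hP : (Rmat B a + Rmat B b)ᴴ * (Rmat B a + Rmat B b) ∈ Submodule.map vecToMat
      (LinearMap.range (choi (Estar ∘ₗ E)).mulVecLin) := by
    rw [hPexp]
    exact Submodule.add_mem _ (Submodule.add_mem _ (Submodule.add_mem _
      (hmemS a a) (hmemS a b)) (hmemS b a)) (hmemS b b)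
  have hQ : (Rmat B a + Complex.I • Rmat B b)ᴴ * (Rmat B a + Complex.I • Rmat B b)
      ∈ Submodule.map vecToMat (LinearMap.range (choi (Estar ∘ₗ E)).mulVecLin) := by
    rw [hQexp]
    exact Submodule.add_mem _ (Submodule.add_mem _ (Submodule.add_mem _
      (hmemS a a) (Submodule.smul_mem _ _ (hmemS a b)))
      (Submodule.smul_mem _ _ (hmemS b a))) (hmemS b b)
  have hVab : Vmat B a b =
      ((2:ℂ)⁻¹) • ((Rmat B a + Rmat B b)ᴴ * (Rmat B a + Rmat B b)
          - Vmat B a a - Vmat B b b)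
      + (-(Complex.I/2)) • ((Rmat B a + Complex.I • Rmat B b)ᴴ *
            (Rmat B a + Complex.I • Rmat B b) - Vmat B a a - Vmat B b b) := by
    rw [hPexp, hQexp]
    match_scalars <;> simp [Complex.ext_iff] <;> ring
  rw [hVab]
  refine Submodule.add_mem _ (Submodule.smul_mem _ _ ?_) (Submodule.smul_mem _ _ ?_)
  · exact Submodule.sub_mem _ (Submodule.sub_mem _
      (hTmem _ hP (Matrix.posSemidef_conjTranspose_mul_self _))
      (hTmem _ (hmemS a a) (Matrix.posSemidef_conjTranspose_mul_self _)))
      (hTmem _ (hmemS b b) (Matrix.posSemidef_conjTranspose_mul_self _))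
  · exact Submodule.sub_mem _ (Submodule.sub_mem _
      (hTmem _ hQ (Matrix.posSemidef_conjTranspose_mul_self _))
      (hTmem _ (hmemS a a) (Matrix.posSemidef_conjTranspose_mul_self _)))
      (hTmem _ (hmemS b b) (Matrix.posSemidef_conjTranspose_mul_self _))
end

section
/- Let {|ψ_i^k⟩}_{i,k} be finitely many vectors in ℂ^d. The matrix subspace spanned by the matrices M_{kl} = Σ_i |ψ_i^k⟩⟨ψ_i^l| (over all pairs k,l) admits a basis of positive-semidefinite matrices. Specifically, for sufficiently large c > 0, the matrices Σ_i(|ψ_i^k⟩⟨ψ_i^l| + |ψ_i^l⟩⟨ψ_i^k|) + c·Σ_{i,k}|ψ_i^k⟩⟨ψ_i^k| and Σ_i i(|ψ_i^k⟩⟨ψ_i^l| − |ψ_i^l⟩⟨ψ_i^k|) + c·Σ_{i,k}|ψ_i^k⟩⟨ψ_i^k| are positive semidefinite and span this subspace. -/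
open Matrix
open scoped ComplexOrder

section helpers
variable {d : ℕ}

private lemma psd_outer (v : Fin d → ℂ) : (vecMulVec v (star v)).PosSemidef := by
  have : vecMulVec v (star v) = (replicateCol (Fin 1) v) * (replicateCol (Fin 1) v)ᴴ := by
    rw [vecMulVec_eq (Fin 1), conjTranspose_replicateCol]; rfl
  rw [this]; exact posSemidef_self_mul_conjTranspose _

private lemma psd_rsmul {A : Matrix (Fin d) (Fin d) ℂ} (hA : A.PosSemidef) {r : ℝ} (hr : 0 ≤ r) :
    ((r : ℂ) • A).PosSemidef := by
  refine .of_dotProduct_mulVec_nonneg ?_ ?_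
  · unfold Matrix.IsHermitian
    rw [conjTranspose_smul, hA.isHermitian.eq]
    norm_num
  · intro x
    rw [smul_mulVec, dotProduct_smul, smul_eq_mul]
    exact mul_nonneg (by exact_mod_cast hr) (hA.dotProduct_mulVec_nonneg x)

private lemma psd_sum {n : Type*} [Fintype n] (f : n → Matrix (Fin d) (Fin d) ℂ)
    (h : ∀ i, (f i).PosSemidef) : (∑ i, f i).PosSemidef :=
  Finset.sum_induction f _ (fun _ _ ha hb => ha.add hb) .zero (fun i _ => h i)

private lemma vmv_add (a b : Fin d → ℂ) :
    vecMulVec (a + b) (star (a + b)) =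
      vecMulVec a (star a) + (vecMulVec a (star b) + vecMulVec b (star a))
        + vecMulVec b (star b) := by
  ext i j; simp [vecMulVec_apply]; ring

private lemma vmv_addI (a b : Fin d → ℂ) :
    vecMulVec (a - Complex.I • b) (star (a - Complex.I • b)) =
      vecMulVec a (star a) + Complex.I • (vecMulVec a (star b) - vecMulVec b (star a))
        + vecMulVec b (star b) := by
  ext i j
  simp [vecMulVec_apply, Complex.ext_iff]
  constructor <;> ring

private lemma hC_aux {ι κ : Type} [Fintype ι] [Fintype κ] [DecidableEq κ]
    (ψ : ι → κ → (Fin d → ℂ)) (c : ℝ) (k l : κ) :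
    ∑ i, ∑ k', (((c - (if k' = k then 1 else 0) - (if k' = l then 1 else 0) : ℝ)) : ℂ)
        • vecMulVec (ψ i k') (star (ψ i k'))
      = (c : ℂ) • ∑ i, ∑ k', vecMulVec (ψ i k') (star (ψ i k'))
        - ∑ i, vecMulVec (ψ i k) (star (ψ i k))
        - ∑ i, vecMulVec (ψ i l) (star (ψ i l)) := by
  push_cast [apply_ite (fun r : ℝ => (r:ℂ))]
  simp only [sub_smul, ite_smul, one_smul, zero_smul, Finset.sum_sub_distrib,
    Finset.sum_ite_eq', Finset.mem_univ, if_true, Finset.smul_sum]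

private lemma span_aux {V : Type*} [AddCommGroup V] [Module ℂ V] {κ : Type} [Fintype κ]
    (M : κ × κ → V) (c : ℝ) (hc : 0 < c) :
    Submodule.span ℂ (Set.range (fun p : κ × κ => M p + M (p.2, p.1) + (c:ℂ) • ∑ k, M (k,k)) ∪
      Set.range (fun p : κ × κ => Complex.I • (M p - M (p.2, p.1)) + (c:ℂ) • ∑ k, M (k,k)))
    = Submodule.span ℂ (Set.range M) := by
  set D : V := ∑ k, M (k,k) with hD
  have hDmem : D ∈ Submodule.span ℂ (Set.range M) :=
    Submodule.sum_mem _ fun k _ => Submodule.subset_span ⟨(k,k), rfl⟩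
  apply le_antisymm
  · rw [Submodule.span_le, Set.union_subset_iff]
    constructor <;> rintro _ ⟨p, rfl⟩
    · exact Submodule.add_mem _
        (Submodule.add_mem _ (Submodule.subset_span ⟨p, rfl⟩)
          (Submodule.subset_span ⟨(p.2,p.1), rfl⟩))
        (Submodule.smul_mem _ _ hDmem)
    · exact Submodule.add_mem _
        (Submodule.smul_mem _ _ (Submodule.sub_mem _ (Submodule.subset_span ⟨p, rfl⟩)
          (Submodule.subset_span ⟨(p.2,p.1), rfl⟩)))
        (Submodule.smul_mem _ _ hDmem)
  · rw [Submodule.span_le]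
    rintro _ ⟨p, rfl⟩
    set S := Submodule.span ℂ
      (Set.range (fun p : κ × κ => M p + M (p.2, p.1) + (c:ℂ) • D) ∪
       Set.range (fun p : κ × κ => Complex.I • (M p - M (p.2, p.1)) + (c:ℂ) • D)) with hS
    have hcard : (0:ℝ) < 2 + (Fintype.card κ) * c := by
      have : (0:ℝ) ≤ (Fintype.card κ) * c := by positivity
      linarith
    have hne : ((2 + (Fintype.card κ) * c : ℝ) : ℂ) ≠ 0 := by
      exact_mod_cast ne_of_gt hcard
    have hsum : ∑ k, (M (k,k) + M (k,k) + (c:ℂ) • D)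
        = ((2 + (Fintype.card κ) * c : ℝ) : ℂ) • D := by
      rw [Finset.sum_add_distrib, Finset.sum_add_distrib, ← hD, Finset.sum_const,
        Finset.card_univ, ← Nat.cast_smul_eq_nsmul ℂ]
      push_cast
      module
    have hDS : D ∈ S := by
      have : D = (((2 + (Fintype.card κ) * c : ℝ) : ℂ))⁻¹ •
          ∑ k, (M (k,k) + M (k,k) + (c:ℂ) • D) := by
        rw [hsum, smul_smul, inv_mul_cancel₀ hne, one_smul]
      rw [this]
      exact Submodule.smul_mem _ _ (Submodule.sum_mem _ fun k _ =>
        Submodule.subset_span (Set.mem_union_left _ ⟨(k,k), rfl⟩))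
    have h1 : M p + M (p.2,p.1) ∈ S := by
      have : M p + M (p.2,p.1) = (M p + M (p.2,p.1) + (c:ℂ) • D) - (c:ℂ) • D := by abel
      rw [this]
      exact Submodule.sub_mem _ (Submodule.subset_span (Set.mem_union_left _ ⟨p, rfl⟩))
        (Submodule.smul_mem _ _ hDS)
    have h2 : M p - M (p.2,p.1) ∈ S := by
      have h2' : Complex.I • (M p - M (p.2,p.1)) ∈ S := by
        have : Complex.I • (M p - M (p.2,p.1)) =
            (Complex.I • (M p - M (p.2,p.1)) + (c:ℂ) • D) - (c:ℂ) • D := by abel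
        rw [this]
        exact Submodule.sub_mem _ (Submodule.subset_span (Set.mem_union_right _ ⟨p, rfl⟩))
          (Submodule.smul_mem _ _ hDS)
      have : M p - M (p.2,p.1) = (-Complex.I) • (Complex.I • (M p - M (p.2,p.1))) := by
        rw [smul_smul]
        simp
      rw [this]
      exact Submodule.smul_mem _ _ h2'
    have : M p = (2⁻¹ : ℂ) • ((M p + M (p.2,p.1)) + (M p - M (p.2,p.1))) := by
      match_scalars <;> norm_num
    rw [this]
    exact Submodule.smul_mem _ _ (Submodule.add_mem _ h1 h2)

end helpers

/-- Let `{|ψ_i^k⟩}` be finitely many vectors in `ℂ^d`. The matrix subspace spanned by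
the matrices `M_{kl} = Σ_i |ψ_i^k⟩⟨ψ_i^l|` admits a basis of positive-semidefinite
matrices: for sufficiently large `c > 0`, the matrices
`Σ_i(|ψ_i^k⟩⟨ψ_i^l| + |ψ_i^l⟩⟨ψ_i^k|) + c·D` and
`Σ_i i(|ψ_i^k⟩⟨ψ_i^l| − |ψ_i^l⟩⟨ψ_i^k|) + c·D`, where `D = Σ_{i,k}|ψ_i^k⟩⟨ψ_i^k|`,
are positive semidefinite and span this subspace. -/
theorem posSemidef_spanning_set {d : ℕ} {ι κ : Type} [Fintype ι] [Fintype κ]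
    (ψ : ι → κ → (Fin d → ℂ)) :
    ∃ c₀ : ℝ, 0 < c₀ ∧ ∀ c : ℝ, c₀ ≤ c →
      (∀ k l : κ,
        (∑ i, (vecMulVec (ψ i k) (star (ψ i l)) + vecMulVec (ψ i l) (star (ψ i k)))
          + (c : ℂ) • ∑ i, ∑ k', vecMulVec (ψ i k') (star (ψ i k'))).PosSemidef ∧
        (∑ i, Complex.I • (vecMulVec (ψ i k) (star (ψ i l)) - vecMulVec (ψ i l) (star (ψ i k)))
          + (c : ℂ) • ∑ i, ∑ k', vecMulVec (ψ i k') (star (ψ i k'))).PosSemidef) ∧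
      Submodule.span ℂ
        (Set.range (fun p : κ × κ =>
          ∑ i, (vecMulVec (ψ i p.1) (star (ψ i p.2)) + vecMulVec (ψ i p.2) (star (ψ i p.1)))
            + (c : ℂ) • ∑ i, ∑ k', vecMulVec (ψ i k') (star (ψ i k'))) ∪
         Set.range (fun p : κ × κ =>
          ∑ i, Complex.I • (vecMulVec (ψ i p.1) (star (ψ i p.2))
              - vecMulVec (ψ i p.2) (star (ψ i p.1)))
            + (c : ℂ) • ∑ i, ∑ k', vecMulVec (ψ i k') (star (ψ i k'))))
      = Submodule.span ℂ
          (Set.range fun p : κ × κ => ∑ i, vecMulVec (ψ i p.1) (star (ψ i p.2))) := by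
  classical
  refine ⟨2, by norm_num, fun c hc => ⟨fun k l => ⟨?_, ?_⟩, ?_⟩⟩
  · -- first PSD
    have key : ∑ i, (vecMulVec (ψ i k) (star (ψ i l)) + vecMulVec (ψ i l) (star (ψ i k)))
          + (c : ℂ) • ∑ i, ∑ k', vecMulVec (ψ i k') (star (ψ i k'))
        = (∑ i, vecMulVec (ψ i k + ψ i l) (star (ψ i k + ψ i l)))
          + ∑ i, ∑ k', (((c - (if k' = k then 1 else 0) - (if k' = l then 1 else 0) : ℝ)) : ℂ)
            • vecMulVec (ψ i k') (star (ψ i k')) := by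
      rw [hC_aux ψ c k l]
      simp only [vmv_add, Finset.sum_add_distrib]
      abel
    rw [key]
    refine (psd_sum _ fun i => psd_outer _).add (psd_sum _ fun i => psd_sum _ fun k' =>
      psd_rsmul (psd_outer _) ?_)
    split_ifs <;> linarith
  · -- second PSD
    have key : ∑ i, Complex.I • (vecMulVec (ψ i k) (star (ψ i l))
            - vecMulVec (ψ i l) (star (ψ i k)))
          + (c : ℂ) • ∑ i, ∑ k', vecMulVec (ψ i k') (star (ψ i k'))
        = (∑ i, vecMulVec (ψ i k - Complex.I • ψ i l) (star (ψ i k - Complex.I • ψ i l)))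
          + ∑ i, ∑ k', (((c - (if k' = k then 1 else 0) - (if k' = l then 1 else 0) : ℝ)) : ℂ)
            • vecMulVec (ψ i k') (star (ψ i k')) := by
      rw [hC_aux ψ c k l]
      simp only [vmv_addI, Finset.sum_add_distrib]
      abel
    rw [key]
    refine (psd_sum _ fun i => psd_outer _).add (psd_sum _ fun i => psd_sum _ fun k' =>
      psd_rsmul (psd_outer _) ?_)
    split_ifs <;> linarith
  · -- span equality
    set M : κ × κ → Matrix (Fin d) (Fin d) ℂ :=
      fun p => ∑ i, vecMulVec (ψ i p.1) (star (ψ i p.2)) with hM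
    have e1 : (fun p : κ × κ =>
          ∑ i, (vecMulVec (ψ i p.1) (star (ψ i p.2)) + vecMulVec (ψ i p.2) (star (ψ i p.1)))
            + (c : ℂ) • ∑ i, ∑ k', vecMulVec (ψ i k') (star (ψ i k')))
        = (fun p : κ × κ => M p + M (p.2, p.1) + (c:ℂ) • ∑ k, M (k,k)) := by
      funext p
      simp only [hM, Finset.sum_add_distrib]
      rw [Finset.sum_comm]
    have e2 : (fun p : κ × κ =>
          ∑ i, Complex.I • (vecMulVec (ψ i p.1) (star (ψ i p.2))
              - vecMulVec (ψ i p.2) (star (ψ i p.1)))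
            + (c : ℂ) • ∑ i, ∑ k', vecMulVec (ψ i k') (star (ψ i k')))
        = (fun p : κ × κ => Complex.I • (M p - M (p.2, p.1)) + (c:ℂ) • ∑ k, M (k,k)) := by
      funext p
      simp only [hM, smul_sub, Finset.sum_sub_distrib, ← Finset.smul_sum]
      rw [Finset.sum_comm]
    rw [e1, e2]
    exact span_aux M c (by linarith)
end

section
/- A quantum channel E has nonzero one-shot zero-error classical capacity if and only if there exist pure states ψ, φ with Tr[|ψ⟩⟨ψ| · (E* ∘ E)(|φ⟩⟨φ|)] = 0. Equivalently, E has zero one-shot zero-error capacity iff the orthogonal complement of the support of the Choi matrix of E* ∘ E contains no product state. -/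
open Matrix
open scoped ComplexConjugate ComplexOrder

/-- The support of a square matrix `σ` on `ℂ^{d_A} ⊗ ℂ^{d_A}`: the span of its
columns, as a subspace of the Euclidean space `ℂ^{d_A} ⊗ ℂ^{d_A}`. -/
noncomputable def matSupport {dA : ℕ} (σ : Matrix (Fin dA × Fin dA) (Fin dA × Fin dA) ℂ) :
    Submodule ℂ (EuclideanSpace ℂ (Fin dA × Fin dA)) :=
  Submodule.span ℂ (Set.range fun j => (WithLp.toLp 2 (fun i => σ i j) : EuclideanSpace ℂ (Fin dA × Fin dA)))

section Aux

lemma trace_mul_sum' {n : Type*} [Fintype n] (A B : Matrix n n ℂ) :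
    (A*B).trace = ∑ i, ∑ j, A i j * B j i := by
  simp only [Matrix.trace, Matrix.mul_apply, Matrix.diag]

lemma trace_conjT_std' {n : Type*} [Fintype n] [DecidableEq n] (C : Matrix n n ℂ) (j i : n) :
    (Cᴴ * single j i (1:ℂ)).trace = conj (C j i) := by
  simp only [Matrix.trace, Matrix.mul_apply, Matrix.diag, single, conjTranspose_apply,
    of_apply, mul_ite, mul_one, mul_zero, ite_and]
  simp

lemma E_entry' {dA dB : ℕ} (E : Matrix (Fin dA) (Fin dA) ℂ →ₗ[ℂ] Matrix (Fin dB) (Fin dB) ℂ)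
    (X : Matrix (Fin dA) (Fin dA) ℂ) (k l : Fin dB) :
    E X k l = ∑ a, ∑ b, X a b * E (single a b 1) k l := by
  conv_lhs => rw [matrix_eq_sum_single X]
  rw [map_sum]
  simp only [map_sum, Matrix.sum_apply]
  refine Finset.sum_congr rfl fun a _ => Finset.sum_congr rfl fun b _ => ?_
  have : single a b (X a b) = X a b • single a b (1:ℂ) := by
    simp [smul_single]
  rw [this, _root_.map_smul]
  simp

lemma Estar_entry' {dA dB : ℕ} (E : Matrix (Fin dA) (Fin dA) ℂ →ₗ[ℂ] Matrix (Fin dB) (Fin dB) ℂ)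
    (Estar : Matrix (Fin dB) (Fin dB) ℂ →ₗ[ℂ] Matrix (Fin dA) (Fin dA) ℂ)
    (hadj : ∀ (A : Matrix (Fin dB) (Fin dB) ℂ) (B : Matrix (Fin dA) (Fin dA) ℂ),
      (Aᴴ * E B).trace = ((Estar A)ᴴ * B).trace)
    (A : Matrix (Fin dB) (Fin dB) ℂ) (i j : Fin dA) :
    Estar A i j = ∑ k, ∑ l, A k l * conj (E (single i j 1) k l) := by
  have h := hadj A (single i j 1)
  rw [trace_conjT_std', trace_mul_sum'] at h
  have h2 := congrArg conj h
  simp only [map_sum, _root_.map_mul, Complex.conj_conj, conjTranspose_apply,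
    RingHom.id_apply] at h2
  rw [← h2]
  rw [Finset.sum_comm]
  refine Finset.sum_congr rfl fun k _ => Finset.sum_congr rfl fun l _ => ?_
  simp [conjTranspose_apply]

lemma sigma_entry' {dA dB : ℕ} (E : Matrix (Fin dA) (Fin dA) ℂ →ₗ[ℂ] Matrix (Fin dB) (Fin dB) ℂ)
    (Estar : Matrix (Fin dB) (Fin dB) ℂ →ₗ[ℂ] Matrix (Fin dA) (Fin dA) ℂ)
    (hadj : ∀ (A : Matrix (Fin dB) (Fin dB) ℂ) (B : Matrix (Fin dA) (Fin dA) ℂ),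
      (Aᴴ * E B).trace = ((Estar A)ᴴ * B).trace) (p q : Fin dA × Fin dA) :
    choi (Estar ∘ₗ E) p q
      = ∑ k, ∑ l, E (single p.1 q.1 1) k l * conj (E (single p.2 q.2 1) k l) := by
  have : choi (Estar ∘ₗ E) p q = Estar (E (single p.1 q.1 1)) p.2 q.2 := rfl
  rw [this, Estar_entry' E Estar hadj]

lemma sigma_psd' {dA dB : ℕ} (E : Matrix (Fin dA) (Fin dA) ℂ →ₗ[ℂ] Matrix (Fin dB) (Fin dB) ℂ)
    (Estar : Matrix (Fin dB) (Fin dB) ℂ →ₗ[ℂ] Matrix (Fin dA) (Fin dA) ℂ)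
    (hadj : ∀ (A : Matrix (Fin dB) (Fin dB) ℂ) (B : Matrix (Fin dA) (Fin dA) ℂ),
      (Aᴴ * E B).trace = ((Estar A)ᴴ * B).trace)
    (hcp : (choi E).PosSemidef) : (choi (Estar ∘ₗ E)).PosSemidef := by
  obtain ⟨B, hB⟩ : ∃ B : Matrix (Fin dA × Fin dB) (Fin dA × Fin dB) ℂ, choi E = Bᴴ * B := by
    open scoped MatrixOrder in exact CStarAlgebra.nonneg_iff_eq_star_mul_self.mp hcp.nonneg
  have hK : ∀ (a : Fin dA) (k : Fin dB) (b : Fin dA) (l : Fin dB),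
      E (single a b 1) k l = ∑ m, conj (B m (a,k)) * B m (b,l) := by
    intro a k b l
    have h1 : E (single a b 1) k l = choi E (a,k) (b,l) := rfl
    rw [h1, hB, Matrix.mul_apply]
    simp [conjTranspose_apply]
  set T : Matrix ((Fin dA × Fin dB) × (Fin dA × Fin dB)) (Fin dA × Fin dA) ℂ :=
    Matrix.of fun mn aj => ∑ k, B mn.1 (aj.1, k) * conj (B mn.2 (aj.2, k)) with hT
  have key : choi (Estar ∘ₗ E) = Tᴴ * T := by
    ext ⟨a, j⟩ ⟨b, i⟩
    rw [sigma_entry' E Estar hadj, Matrix.mul_apply]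
    simp only [hK, hT, conjTranspose_apply, of_apply, star_sum, star_mul', map_sum,
      _root_.map_mul, Complex.conj_conj, Finset.sum_mul, Finset.mul_sum, RCLike.star_def]
    simp only [← Fintype.sum_prod_type']
    refine Fintype.sum_equiv ⟨fun x => ((x.2.2.2, x.2.2.1), x.2.1, x.1),
      fun y => (y.2.2, y.2.1, y.1.2, y.1.1), fun x => rfl, fun y => rfl⟩ _ _ (fun x => ?_)
    simp only [Equiv.coe_fn_mk]
    ring
  rw [key]
  exact posSemidef_conjTranspose_mul_self T

lemma traceEE_eq' {dA dB : ℕ} (E : Matrix (Fin dA) (Fin dA) ℂ →ₗ[ℂ] Matrix (Fin dB) (Fin dB) ℂ)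
    (Estar : Matrix (Fin dB) (Fin dB) ℂ →ₗ[ℂ] Matrix (Fin dA) (Fin dA) ℂ)
    (hadj : ∀ (A : Matrix (Fin dB) (Fin dB) ℂ) (B : Matrix (Fin dA) (Fin dA) ℂ),
      (Aᴴ * E B).trace = ((Estar A)ᴴ * B).trace) (ψ φ : Fin dA → ℂ) :
    ((E (vecMulVec ψ (star ψ)))ᴴ * E (vecMulVec φ (star φ))).trace
      = star (fun p : Fin dA × Fin dA => conj (φ p.1) * ψ p.2) ⬝ᵥ
          (choi (Estar ∘ₗ E) *ᵥ fun p => conj (φ p.1) * ψ p.2) := by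
  simp only [Matrix.trace, Matrix.mul_apply, Matrix.diag, conjTranspose_apply,
    dotProduct, mulVec, Pi.star_apply, RCLike.star_def, sigma_entry' E Estar hadj,
    E_entry' E (vecMulVec _ _), vecMulVec_apply, Pi.star_apply, RCLike.star_def,
    map_sum, _root_.map_mul, Complex.conj_conj, Finset.sum_mul, Finset.mul_sum,
    Fintype.sum_prod_type]
  simp only [← Fintype.sum_prod_type']
  refine Fintype.sum_equiv ⟨fun x => (x.2.2.1, x.2.2.2.2.1, x.2.2.2.1, x.2.2.2.2.2, x.2.1, x.1),
    fun y => (y.2.2.2.2.2, y.2.2.2.2.1, y.1, y.2.2.1, y.2.1, y.2.2.2.1),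
    fun x => rfl, fun y => rfl⟩ _ _ (fun x => ?_)
  simp only [Equiv.coe_fn_mk]
  ring

lemma traceEstar_eq' {dA dB : ℕ} (E : Matrix (Fin dA) (Fin dA) ℂ →ₗ[ℂ] Matrix (Fin dB) (Fin dB) ℂ)
    (Estar : Matrix (Fin dB) (Fin dB) ℂ →ₗ[ℂ] Matrix (Fin dA) (Fin dA) ℂ)
    (hadj : ∀ (A : Matrix (Fin dB) (Fin dB) ℂ) (B : Matrix (Fin dA) (Fin dA) ℂ),
      (Aᴴ * E B).trace = ((Estar A)ᴴ * B).trace) (ψ φ : Fin dA → ℂ) :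
    (vecMulVec ψ (star ψ) * Estar (E (vecMulVec φ (star φ)))).trace
      = star (fun p : Fin dA × Fin dA => conj (φ p.1) * ψ p.2) ⬝ᵥ
          (choi (Estar ∘ₗ E) *ᵥ fun p => conj (φ p.1) * ψ p.2) := by
  simp only [Matrix.trace, Matrix.mul_apply, Matrix.diag,
    dotProduct, mulVec, Pi.star_apply, RCLike.star_def, sigma_entry' E Estar hadj,
    Estar_entry' E Estar hadj (E (vecMulVec φ (star φ))),
    E_entry' E (vecMulVec φ (star φ)), vecMulVec_apply,
    map_sum, _root_.map_mul, Complex.conj_conj, Finset.sum_mul, Finset.mul_sum,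
    Fintype.sum_prod_type]
  simp only [← Fintype.sum_prod_type']
  refine Fintype.sum_equiv ⟨fun x => (x.2.2.2.2.1, x.2.1, x.2.2.2.2.2, x.1, x.2.2.1, x.2.2.2.1),
    fun y => (y.2.2.2.1, y.2.1, y.2.2.2.2.1, y.2.2.2.2.2, y.1, y.2.2.1),
    fun x => rfl, fun y => rfl⟩ _ _ (fun x => ?_)
  simp only [Equiv.coe_fn_mk]
  ring

lemma mem_orth_iff' {dA : ℕ} (σ : Matrix (Fin dA × Fin dA) (Fin dA × Fin dA) ℂ)
    (hherm : σ.IsHermitian) (w : EuclideanSpace ℂ (Fin dA × Fin dA)) :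
    w ∈ (matSupport σ)ᗮ ↔ σ *ᵥ w = 0 := by
  set col : Fin dA × Fin dA → EuclideanSpace ℂ (Fin dA × Fin dA) := fun j => WithLp.toLp 2 (fun i => σ i j) with hcol
  have hinner : ∀ j : Fin dA × Fin dA,
      (inner ℂ (col j) w : ℂ) = (σ *ᵥ w) j := by
    intro j
    rw [PiLp.inner_apply]
    simp only [RCLike.inner_apply, mulVec, dotProduct]
    refine Finset.sum_congr rfl fun i _ => ?_
    simp only [hcol]
    rw [show (starRingEnd ℂ) (σ i j) = star (σ i j) from rfl, hherm.apply j i]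
    exact mul_comm _ _
  rw [matSupport, Submodule.mem_orthogonal]
  constructor
  · intro h
    funext j
    rw [← hinner j]
    exact h _ (Submodule.subset_span (Set.mem_range_self j))
  · intro h u hu
    induction hu using Submodule.span_induction with
    | mem x hx =>
      obtain ⟨j, rfl⟩ := hx
      rw [hinner j, h]
      rfl
    | zero => exact inner_zero_left w
    | add x y hx hy ihx ihy => rw [inner_add_left, ihx, ihy, add_zero]
    | smul a x hx ih => rw [inner_smul_left, ih, mul_zero]

end Aux

/-- A quantum channel `E` has nonzero one-shot zero-error classical capacity (two input
pure states whose images have orthogonal supports, `Tr[E(ψ)† E(φ)] = 0`) iff there are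
pure states `ψ, φ` with `Tr[|ψ⟩⟨ψ| · (E*∘E)(|φ⟩⟨φ|)] = 0`; equivalently, `E` has zero
one-shot zero-error capacity iff the orthogonal complement of the support of the Choi
matrix of `E* ∘ E` contains no (nonzero) product state. -/
theorem one_shot_zero_error_characterization {dA dB : ℕ}
    (E : Matrix (Fin dA) (Fin dA) ℂ →ₗ[ℂ] Matrix (Fin dB) (Fin dB) ℂ)
    (Estar : Matrix (Fin dB) (Fin dB) ℂ →ₗ[ℂ] Matrix (Fin dA) (Fin dA) ℂ)
    (hadj : ∀ (A : Matrix (Fin dB) (Fin dB) ℂ) (B : Matrix (Fin dA) (Fin dA) ℂ),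
      (Aᴴ * E B).trace = ((Estar A)ᴴ * B).trace)
    (hcp : (choi E).PosSemidef)
    (htp : ∀ X : Matrix (Fin dA) (Fin dA) ℂ, (E X).trace = X.trace) :
    ((∃ ψ φ : Fin dA → ℂ, ψ ≠ 0 ∧ φ ≠ 0 ∧
        ((E (vecMulVec ψ (star ψ)))ᴴ * E (vecMulVec φ (star φ))).trace = 0) ↔
      (∃ ψ φ : Fin dA → ℂ, ψ ≠ 0 ∧ φ ≠ 0 ∧
        (vecMulVec ψ (star ψ) * Estar (E (vecMulVec φ (star φ)))).trace = 0)) ∧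
    ((¬ ∃ ψ φ : Fin dA → ℂ, ψ ≠ 0 ∧ φ ≠ 0 ∧
        ((E (vecMulVec ψ (star ψ)))ᴴ * E (vecMulVec φ (star φ))).trace = 0) ↔
      (∀ u v : Fin dA → ℂ, u ≠ 0 → v ≠ 0 →
        (WithLp.toLp 2 (fun p : Fin dA × Fin dA => u p.1 * v p.2) : EuclideanSpace ℂ (Fin dA × Fin dA)) ∉
          (matSupport (choi (Estar ∘ₗ E)))ᗮ)) := by
  have hEE := traceEE_eq' E Estar hadj
  have hES := traceEstar_eq' E Estar hadj
  have hσ : (choi (Estar ∘ₗ E)).PosSemidef := sigma_psd' E Estar hadj hcp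
  have horth := mem_orth_iff' (choi (Estar ∘ₗ E)) hσ.1
  constructor
  · constructor
    · rintro ⟨ψ, φ, h1, h2, h3⟩
      exact ⟨ψ, φ, h1, h2, by rw [hES ψ φ, ← hEE ψ φ]; exact h3⟩
    · rintro ⟨ψ, φ, h1, h2, h3⟩
      exact ⟨ψ, φ, h1, h2, by rw [hEE ψ φ, ← hES ψ φ]; exact h3⟩
  · constructor
    · intro hno u v hu hv hmem
      apply hno
      refine ⟨v, star u, hv, fun h => hu (by simpa using congrArg star h), ?_⟩
      rw [hEE v (star u)]
      have hw : (fun p : Fin dA × Fin dA => conj ((star u) p.1) * v p.2)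
          = (fun p : Fin dA × Fin dA => u p.1 * v p.2) := by
        funext p; simp
      rw [hw]
      have h0 : choi (Estar ∘ₗ E) *ᵥ (fun p => u p.1 * v p.2) = 0 := (horth _).mp hmem
      rw [h0, dotProduct_zero]
    · rintro hall ⟨ψ, φ, h1, h2, h3⟩
      refine hall (star φ) ψ (fun h => h2 (by simpa using congrArg star h)) h1 ?_
      have hw : (fun p : Fin dA × Fin dA => (star φ) p.1 * ψ p.2)
          = (fun p : Fin dA × Fin dA => conj (φ p.1) * ψ p.2) := rfl
      rw [horth, hw]
      rw [hEE ψ φ] at h3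
      exact (hσ.dotProduct_mulVec_zero_iff _).mp h3
end

section
/- Let X be the d × d antidiagonal permutation matrix (X_{i,j} = 1 iff i + j = d + 1). Define F₁(S) = S + Flip(S) and F₂(S) = S + (I ⊗ X)·Flip((I ⊗ X)·S) for subspaces S ⊆ ℂ^d ⊗ ℂ^d. Then alternately iterating F₁ and F₂ starting from any subspace S converges after finitely many steps to a subspace F(S) satisfying Flip(F(S)) = F(S) and Flip((I⊗X)·F(S)) = (I⊗X)·F(S), and dim F(S) ≤ 4 · dim S. -/
open scoped ComplexConjugate

noncomputable section

/-- The flip operation on `ℂ^d ⊗ ℂ^d` as a conjugate-linear (star-semilinear) map: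
under the coefficient-matrix isomorphism it acts as `M ↦ M†`. -/
def flipL (d : ℕ) : ((Fin d × Fin d) → ℂ) →ₛₗ[starRingEnd ℂ] ((Fin d × Fin d) → ℂ) where
  toFun v := fun p => conj (v (p.2, p.1))
  map_add' u v := by funext p; simp
  map_smul' c v := by funext p; simp [mul_comm]

instance : RingHomSurjective (starRingEnd ℂ) :=
  ⟨fun x => ⟨conj x, by simp⟩⟩

/-- The action of `I ⊗ X` on `ℂ^d ⊗ ℂ^d`, where `X` is the antidiagonal permutation
matrix (`X_{i,j} = 1` iff `i + j = d + 1`): `((I⊗X)v)(i,j) = v(i, rev j)`. -/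
def mapIX (d : ℕ) : ((Fin d × Fin d) → ℂ) →ₗ[ℂ] ((Fin d × Fin d) → ℂ) :=
  LinearMap.funLeft ℂ ℂ fun p => (p.1, p.2.rev)

/-- `F₁(S) = S + Flip(S)`. -/
def F₁ {d : ℕ} (S : Submodule ℂ ((Fin d × Fin d) → ℂ)) :
    Submodule ℂ ((Fin d × Fin d) → ℂ) :=
  S ⊔ Submodule.map (flipL d) S

/-- `F₂(S) = S + (I⊗X)·Flip((I⊗X)·S)`. -/
def F₂ {d : ℕ} (S : Submodule ℂ ((Fin d × Fin d) → ℂ)) :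
    Submodule ℂ ((Fin d × Fin d) → ℂ) :=
  S ⊔ Submodule.map (mapIX d) (Submodule.map (flipL d) (Submodule.map (mapIX d) S))

@[simp] lemma flipL_apply {d : ℕ} (v : (Fin d × Fin d) → ℂ) (p : Fin d × Fin d) :
    flipL d v p = conj (v (p.2, p.1)) := rfl

@[simp] lemma mapIX_apply {d : ℕ} (v : (Fin d × Fin d) → ℂ) (p : Fin d × Fin d) :
    mapIX d v p = v (p.1, p.2.rev) := rfl

lemma flip_flip' {d : ℕ} (v : (Fin d × Fin d) → ℂ) : flipL d (flipL d v) = v := by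
  funext p; simp

lemma ix_ix {d : ℕ} (v : (Fin d × Fin d) → ℂ) : mapIX d (mapIX d v) = v := by
  funext p; simp

lemma flip_ix_comm {d : ℕ} (v : (Fin d × Fin d) → ℂ) :
    flipL d (mapIX d (flipL d (mapIX d v))) = mapIX d (flipL d (mapIX d (flipL d v))) := by
  funext p; simp

lemma map_flip_flip {d : ℕ} (S : Submodule ℂ ((Fin d × Fin d) → ℂ)) :
    Submodule.map (flipL d) (Submodule.map (flipL d) S) = S := by
  apply SetLike.coe_injective
  rw [Submodule.map_coe, Submodule.map_coe, ← Set.image_comp]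
  have h : (⇑(flipL d) ∘ ⇑(flipL d)) = id := funext flip_flip'
  rw [h, Set.image_id]

lemma map_ix_ix {d : ℕ} (S : Submodule ℂ ((Fin d × Fin d) → ℂ)) :
    Submodule.map (mapIX d) (Submodule.map (mapIX d) S) = S := by
  apply SetLike.coe_injective
  rw [Submodule.map_coe, Submodule.map_coe, ← Set.image_comp]
  have h : (⇑(mapIX d) ∘ ⇑(mapIX d)) = id := funext ix_ix
  rw [h, Set.image_id]

lemma map_comm {d : ℕ} (S : Submodule ℂ ((Fin d × Fin d) → ℂ)) :
    Submodule.map (flipL d) (Submodule.map (mapIX d)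
      (Submodule.map (flipL d) (Submodule.map (mapIX d) S))) =
    Submodule.map (mapIX d) (Submodule.map (flipL d)
      (Submodule.map (mapIX d) (Submodule.map (flipL d) S))) := by
  apply SetLike.coe_injective
  simp only [Submodule.map_coe]
  rw [← Set.image_comp, ← Set.image_comp, ← Set.image_comp, ← Set.image_comp,
    ← Set.image_comp, ← Set.image_comp]
  exact Set.image_congr' (fun v => flip_ix_comm v)

lemma finrank_map_flip_le {d : ℕ} (S : Submodule ℂ ((Fin d × Fin d) → ℂ)) :
    Module.finrank ℂ (Submodule.map (flipL d) S) ≤ Module.finrank ℂ S := by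
  classical
  set b := Module.finBasis ℂ S with hb
  have hS : S = Submodule.span ℂ
      (Set.range fun i => (b i : (Fin d × Fin d) → ℂ)) := by
    conv_lhs => rw [← Submodule.map_subtype_top S, ← b.span_eq, Submodule.map_span]
    congr 1
    rw [← Set.range_comp]
    rfl
  conv_lhs => rw [hS]
  rw [Submodule.map_span, ← Set.range_comp]
  refine (finrank_range_le_card _).trans ?_
  simp

/-- Alternately iterating `F₁` and `F₂` from any subspace `S ⊆ ℂ^d ⊗ ℂ^d` converges
after finitely many steps to a subspace `F(S)` which is invariant under `Flip` and
under the `(I⊗X)`-conjugated flip, and `dim F(S) ≤ 4 · dim S`. -/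
theorem symmetrisation_converges {d : ℕ} (S : Submodule ℂ ((Fin d × Fin d) → ℂ)) :
    ∃ n : ℕ,
      (∀ m, n ≤ m → (F₂ ∘ F₁)^[m] S = (F₂ ∘ F₁)^[n] S) ∧
      Submodule.map (flipL d) ((F₂ ∘ F₁)^[n] S) = (F₂ ∘ F₁)^[n] S ∧
      Submodule.map (flipL d) (Submodule.map (mapIX d) ((F₂ ∘ F₁)^[n] S)) =
        Submodule.map (mapIX d) ((F₂ ∘ F₁)^[n] S) ∧
      Module.finrank ℂ ((F₂ ∘ F₁)^[n] S : Submodule ℂ ((Fin d × Fin d) → ℂ)) ≤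
        4 * Module.finrank ℂ S := by
  classical
  set A : Submodule ℂ ((Fin d × Fin d) → ℂ) → Submodule ℂ ((Fin d × Fin d) → ℂ) :=
    fun T => Submodule.map (flipL d) T with hAdef
  set B : Submodule ℂ ((Fin d × Fin d) → ℂ) → Submodule ℂ ((Fin d × Fin d) → ℂ) :=
    fun T => Submodule.map (mapIX d) T with hBdef
  have hBsup : ∀ T T', B (T ⊔ T') = B T ⊔ B T' := fun T T' => Submodule.map_sup _ _ _
  have hAsup : ∀ T T', A (T ⊔ T') = A T ⊔ A T' := fun T T' => Submodule.map_sup _ _ _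
  have hAA : ∀ T, A (A T) = T := fun T => map_flip_flip T
  have hBB : ∀ T, B (B T) = T := fun T => map_ix_ix T
  -- the second symmetry
  set T₂ : Submodule ℂ ((Fin d × Fin d) → ℂ) → Submodule ℂ ((Fin d × Fin d) → ℂ) :=
    fun T => B (A (B T)) with hT₂def
  have hcomm : ∀ T, A (T₂ T) = T₂ (A T) := fun T => map_comm T
  have hT₂sup : ∀ T T', T₂ (T ⊔ T') = T₂ T ⊔ T₂ T' := by
    intro T T'; simp only [hT₂def, hBsup, hAsup]
  have hT₂T₂ : ∀ T, T₂ (T₂ T) = T := by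
    intro T
    simp only [hT₂def, hBB, hAA]
  -- the candidate fixed point after one step
  set G : Submodule ℂ ((Fin d × Fin d) → ℂ) := (F₂ ∘ F₁) S with hGdef
  have hG : G = (S ⊔ A S) ⊔ (T₂ S ⊔ T₂ (A S)) := by
    simp only [hGdef, Function.comp_apply, F₁, F₂]
    rw [← hT₂sup]
  have hAG : A G = G := by
    rw [hG, hAsup, hAsup, hAsup, hAA, hcomm]
    have : A (T₂ (A S)) = T₂ S := by rw [hcomm, hAA]
    rw [this]
    rw [sup_comm (A S) S, sup_comm (T₂ (A S)) (T₂ S)]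
  have hT₂G : T₂ G = G := by
    rw [hG, hT₂sup, hT₂sup, hT₂sup, hT₂T₂]
    have : T₂ (T₂ (A S)) = A S := hT₂T₂ _
    rw [this, sup_comm (T₂ S ⊔ T₂ (A S)) (S ⊔ A S)]
  have hfix : (F₂ ∘ F₁) G = G := by
    have h1 : F₁ G = G := by
      show G ⊔ A G = G
      rw [hAG, sup_idem]
    have h2 : F₂ G = G := by
      show G ⊔ T₂ G = G
      rw [hT₂G, sup_idem]
    simp [h1, h2]
  refine ⟨1, ?_, ?_, ?_, ?_⟩
  · intro m hm
    induction m with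
    | zero => omega
    | succ k ih =>
      rcases Nat.eq_or_lt_of_le hm with h | h
      · rw [← h]
      · have hk : 1 ≤ k := by omega
        rw [Function.iterate_succ_apply', ih hk]
        simpa [hGdef] using hfix
  · simpa [hAdef, hGdef] using hAG
  · -- A (B G) = B G follows from T₂ G = G
    have := congrArg B hT₂G
    simp only [hT₂def] at this
    rw [hBB] at this
    simpa [hAdef, hBdef, hGdef] using this
  · have h4 : (F₂ ∘ F₁)^[1] S = (S ⊔ A S) ⊔ (T₂ S ⊔ T₂ (A S)) := by
      simpa [hGdef] using hG
    rw [h4]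
    have hAle : Module.finrank ℂ (A S) ≤ Module.finrank ℂ S := finrank_map_flip_le S
    have hBle : ∀ T : Submodule ℂ ((Fin d × Fin d) → ℂ),
        Module.finrank ℂ (B T) ≤ Module.finrank ℂ T :=
      fun T => Submodule.finrank_map_le _ _
    have hT₂le : ∀ T : Submodule ℂ ((Fin d × Fin d) → ℂ),
        Module.finrank ℂ (T₂ T) ≤ Module.finrank ℂ T := by
      intro T
      calc Module.finrank ℂ (B (A (B T))) ≤ Module.finrank ℂ (A (B T)) := hBle _
        _ ≤ Module.finrank ℂ (B T) := finrank_map_flip_le _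
        _ ≤ Module.finrank ℂ T := hBle _
    calc Module.finrank ℂ ((S ⊔ A S) ⊔ (T₂ S ⊔ T₂ (A S)) : Submodule ℂ _)
        ≤ Module.finrank ℂ (S ⊔ A S : Submodule ℂ _) +
            Module.finrank ℂ (T₂ S ⊔ T₂ (A S) : Submodule ℂ _) :=
          Submodule.finrank_add_le_finrank_add_finrank _ _
      _ ≤ (Module.finrank ℂ S + Module.finrank ℂ (A S)) +
            (Module.finrank ℂ (T₂ S) + Module.finrank ℂ (T₂ (A S))) :=
          Nat.add_le_add (Submodule.finrank_add_le_finrank_add_finrank _ _)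
            (Submodule.finrank_add_le_finrank_add_finrank _ _)
      _ ≤ (Module.finrank ℂ S + Module.finrank ℂ S) +
            (Module.finrank ℂ S + Module.finrank ℂ S) := by
          refine Nat.add_le_add (Nat.add_le_add le_rfl hAle) (Nat.add_le_add ?_ ?_)
          · exact hT₂le S
          · exact (hT₂le _).trans hAle
      _ = 4 * Module.finrank ℂ S := by ring


end
end

section
/- Let {α_i ⊗ β_i}_{i=1}^{k₁} be a finite set of product vectors in ℂ^{a₁} ⊗ ℂ^{b₁} whose span's orthogonal complement contains no nonzero product vector, and let {γ_j ⊗ δ_j}_{j=1}^{k₂} be such a set in ℂ^{a₂} ⊗ ℂ^{b₂}. Then the set of product vectors {(α_i ⊗ γ_j) ⊗ (β_i ⊗ δ_j)}_{i,j} in (ℂ^{a₁} ⊗ ℂ^{a₂}) ⊗ (ℂ^{b₁} ⊗ ℂ^{b₂}) likewise spans a subspace whose orthogonal complement contains no nonzero product vector. -/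
open scoped ComplexConjugate

/-- If `{α_i ⊗ β_i}` is a (not necessarily orthogonal) unextendible product basis in
`ℂ^{a₁} ⊗ ℂ^{b₁}` (no nonzero product vector is orthogonal to all of them), and
`{γ_j ⊗ δ_j}` is one in `ℂ^{a₂} ⊗ ℂ^{b₂}`, then `{(α_i ⊗ γ_j) ⊗ (β_i ⊗ δ_j)}` is an
unextendible product basis in `(ℂ^{a₁} ⊗ ℂ^{a₂}) ⊗ (ℂ^{b₁} ⊗ ℂ^{b₂})`. -/
theorem tensor_of_UPB_is_UPB {a₁ b₁ a₂ b₂ k₁ k₂ : ℕ}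
    (α : Fin k₁ → Fin a₁ → ℂ) (β : Fin k₁ → Fin b₁ → ℂ)
    (γ : Fin k₂ → Fin a₂ → ℂ) (δ : Fin k₂ → Fin b₂ → ℂ)
    (h₁ : ∀ (u : Fin a₁ → ℂ) (v : Fin b₁ → ℂ), u ≠ 0 → v ≠ 0 →
      ∃ i, (∑ x, ∑ y, conj (α i x * β i y) * (u x * v y)) ≠ 0)
    (h₂ : ∀ (u : Fin a₂ → ℂ) (v : Fin b₂ → ℂ), u ≠ 0 → v ≠ 0 →
      ∃ j, (∑ x, ∑ y, conj (γ j x * δ j y) * (u x * v y)) ≠ 0) :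
    ∀ (u : Fin a₁ × Fin a₂ → ℂ) (v : Fin b₁ × Fin b₂ → ℂ), u ≠ 0 → v ≠ 0 →
      ∃ i j, (∑ x : Fin a₁ × Fin a₂, ∑ y : Fin b₁ × Fin b₂,
        conj (α i x.1 * γ j x.2 * (β i y.1 * δ j y.2)) * (u x * v y)) ≠ 0 := by
  intro u v hu hv
  obtain ⟨⟨xa, xb⟩, hx⟩ : ∃ x, u x ≠ 0 := by
    by_contra h; push_neg at h; exact hu (funext h)
  obtain ⟨⟨ya, yb⟩, hy⟩ : ∃ y, v y ≠ 0 := by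
    by_contra h; push_neg at h; exact hv (funext h)
  have hu1 : (fun x1 => u (x1, xb)) ≠ 0 := fun h => hx (congrFun h xa)
  have hv1 : (fun y1 => v (y1, yb)) ≠ 0 := fun h => hy (congrFun h ya)
  obtain ⟨i, hi⟩ := h₁ _ _ hu1 hv1
  set p : Fin a₂ → ℂ := fun x2 => ∑ x1, conj (α i x1) * u (x1, x2) with hp_def
  set q : Fin b₂ → ℂ := fun y2 => ∑ y1, conj (β i y1) * v (y1, y2) with hq_def
  have hi' : p xb * q yb ≠ 0 := by
    convert hi using 1
    rw [hp_def, hq_def]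
    simp only
    rw [Finset.sum_mul_sum]
    refine Finset.sum_congr rfl fun x1 _ => Finset.sum_congr rfl fun y1 _ => ?_
    simp only [map_mul]; ring
  have hp : p ≠ 0 := fun h => hi' (by rw [h]; simp)
  have hq : q ≠ 0 := fun h => hi' (by rw [h]; simp)
  obtain ⟨j, hj⟩ := h₂ p q hp hq
  refine ⟨i, j, ?_⟩
  convert hj using 1
  rw [Fintype.sum_prod_type]
  rw [Finset.sum_comm]
  refine Finset.sum_congr rfl fun x2 _ => ?_
  have step : ∀ x1 : Fin a₁,
      (∑ y : Fin b₁ × Fin b₂,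
        conj (α i x1 * γ j x2 * (β i y.1 * δ j y.2)) * (u (x1, x2) * v y))
      = ∑ y2 : Fin b₂, ∑ y1 : Fin b₁,
        conj (α i x1 * γ j x2 * (β i y1 * δ j y2)) * (u (x1, x2) * v (y1, y2)) := by
    intro x1
    rw [Fintype.sum_prod_type, Finset.sum_comm]
  simp only [step]
  rw [Finset.sum_comm]
  refine Finset.sum_congr rfl fun y2 _ => ?_
  rw [hp_def, hq_def]
  simp only
  conv_rhs => rw [Finset.sum_mul_sum, Finset.mul_sum]
  refine Finset.sum_congr rfl fun x1 _ => ?_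
  conv_rhs => rw [Finset.mul_sum]
  refine Finset.sum_congr rfl fun y1 _ => ?_
  simp only [map_mul]; ring
end

section
/- If a subspace S ⊆ H_A ⊗ H_B is spanned by an unextendible product basis, then S is strongly unextendible: for every k ≥ 1, the orthogonal complement of S^{⊗k} inside (H_A ⊗ H_B)^{⊗k} ≅ H_A^{⊗k} ⊗ H_B^{⊗k} contains no nonzero product vector with respect to the bipartition A^{⊗k} | B^{⊗k}. -/
open scoped ComplexConjugate

private lemma factor_sum {a b : ℕ} (A : Fin a → ℂ) (B : Fin b → ℂ)
    (U : Fin a → ℂ) (V : Fin b → ℂ) :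
    (∑ p : Fin a × Fin b, conj (A p.1 * B p.2) * (U p.1 * V p.2)) =
      (∑ x, conj (A x) * U x) * (∑ y, conj (B y) * V y) := by
  rw [Finset.sum_mul_sum, Fintype.sum_prod_type]
  refine Finset.sum_congr rfl fun x _ => Finset.sum_congr rfl fun y _ => ?_
  simp only [map_mul]
  ring

private lemma upb_pow {a b m : ℕ}
    (α : Fin m → Fin a → ℂ) (β : Fin m → Fin b → ℂ)
    (hUPB : ∀ (u : Fin a → ℂ) (v : Fin b → ℂ), u ≠ 0 → v ≠ 0 →
      ∃ i, (∑ p : Fin a × Fin b, conj (α i p.1 * β i p.2) * (u p.1 * v p.2)) ≠ 0) :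
    ∀ k : ℕ,
      ∀ (u : (Fin k → Fin a) → ℂ) (v : (Fin k → Fin b) → ℂ), u ≠ 0 → v ≠ 0 →
        ∃ j : Fin k → Fin m,
          (∑ f : Fin k → Fin a × Fin b,
            conj (∏ i, α (j i) (f i).1 * β (j i) (f i).2) *
              (u (fun i => (f i).1) * v (fun i => (f i).2))) ≠ 0 := by
  intro k
  induction k with
  | zero =>
    intro u v hu hv
    obtain ⟨x, hx⟩ := Function.ne_iff.mp hu
    obtain ⟨y, hy⟩ := Function.ne_iff.mp hv
    refine ⟨fun i => i.elim0, ?_⟩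
    rw [Fintype.sum_unique]
    simp only [Fin.prod_univ_zero, map_one, one_mul]
    have h1 : (fun i : Fin 0 => ((default : Fin 0 → Fin a × Fin b) i).1) = x :=
      Subsingleton.elim _ _
    have h2 : (fun i : Fin 0 => ((default : Fin 0 → Fin a × Fin b) i).2) = y :=
      Subsingleton.elim _ _
    rw [h1, h2]
    exact mul_ne_zero hx hy
  | succ k ih =>
    intro u v hu hv
    obtain ⟨f₀, hf₀⟩ := Function.ne_iff.mp hu
    obtain ⟨g₀, hg₀⟩ := Function.ne_iff.mp hv
    have hx : (fun x => u (Fin.cons x (Fin.tail f₀))) ≠ 0 := by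
      intro h
      apply hf₀
      have := congrFun h (f₀ 0)
      simpa [Fin.cons_self_tail] using this
    have hy : (fun y => v (Fin.cons y (Fin.tail g₀))) ≠ 0 := by
      intro h
      apply hg₀
      have := congrFun h (g₀ 0)
      simpa [Fin.cons_self_tail] using this
    obtain ⟨j₀, hj₀⟩ := hUPB _ _ hx hy
    have hfac0 := factor_sum (α j₀) (β j₀) (fun x => u (Fin.cons x (Fin.tail f₀)))
      (fun y => v (Fin.cons y (Fin.tail g₀)))
    rw [hfac0] at hj₀
    set u' : (Fin k → Fin a) → ℂ := fun g => ∑ x, conj (α j₀ x) * u (Fin.cons x g) with hu'def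
    set v' : (Fin k → Fin b) → ℂ := fun g => ∑ y, conj (β j₀ y) * v (Fin.cons y g) with hv'def
    have hu' : u' ≠ 0 := by
      intro h
      exact (mul_ne_zero_iff.mp hj₀).1 (congrFun h (Fin.tail f₀))
    have hv' : v' ≠ 0 := by
      intro h
      exact (mul_ne_zero_iff.mp hj₀).2 (congrFun h (Fin.tail g₀))
    obtain ⟨j, hj⟩ := ih u' v' hu' hv'
    refine ⟨(Fin.cons j₀ j : Fin (k+1) → Fin m), ?_⟩
    have key : (∑ f : Fin (k+1) → Fin a × Fin b,
        conj (∏ i, α ((Fin.cons j₀ j : Fin (k+1) → Fin m) i) (f i).1 * β ((Fin.cons j₀ j : Fin (k+1) → Fin m) i) (f i).2) *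
          (u (fun i => (f i).1) * v (fun i => (f i).2))) =
        (∑ f : Fin k → Fin a × Fin b,
          conj (∏ i, α (j i) (f i).1 * β (j i) (f i).2) *
            (u' (fun i => (f i).1) * v' (fun i => (f i).2))) := by
      rw [← (Fin.consEquiv (fun _ : Fin (k+1) => Fin a × Fin b)).sum_comp]
      rw [Fintype.sum_prod_type]
      rw [Finset.sum_comm]
      refine Finset.sum_congr rfl fun f _ => ?_
      have hfac : u' (fun i => (f i).1) * v' (fun i => (f i).2) =
          ∑ p : Fin a × Fin b, conj (α j₀ p.1 * β j₀ p.2) *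
            (u (Fin.cons p.1 (fun i => (f i).1)) * v (Fin.cons p.2 (fun i => (f i).2))) := by
        rw [hu'def, hv'def]
        exact (factor_sum (α j₀) (β j₀) (fun x => u (Fin.cons x (fun i => (f i).1)))
          (fun y => v (Fin.cons y (fun i => (f i).2)))).symm
      rw [hfac, Finset.mul_sum]
      refine Finset.sum_congr rfl fun p _ => ?_
      have e1 : (fun i : Fin (k+1) =>
          ((Fin.consEquiv (fun _ : Fin (k+1) => Fin a × Fin b)) (p, f) i).1) =
          Fin.cons p.1 (fun i => (f i).1) := by
        funext i
        refine Fin.cases ?_ (fun i => ?_) i <;> simp [Fin.consEquiv]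
      have e2 : (fun i : Fin (k+1) =>
          ((Fin.consEquiv (fun _ : Fin (k+1) => Fin a × Fin b)) (p, f) i).2) =
          Fin.cons p.2 (fun i => (f i).2) := by
        funext i
        refine Fin.cases ?_ (fun i => ?_) i <;> simp [Fin.consEquiv]
      rw [e1, e2]
      have e3 : (∏ i : Fin (k+1),
          α ((Fin.cons j₀ j : Fin (k+1) → Fin m) i) (((Fin.consEquiv (fun _ : Fin (k+1) => Fin a × Fin b)) (p, f)) i).1 *
            β ((Fin.cons j₀ j : Fin (k+1) → Fin m) i) (((Fin.consEquiv (fun _ : Fin (k+1) => Fin a × Fin b)) (p, f)) i).2) =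
          (α j₀ p.1 * β j₀ p.2) * ∏ i : Fin k, α (j i) (f i).1 * β (j i) (f i).2 := by
        rw [Fin.prod_univ_succ]
        simp [Fin.consEquiv]
      rw [e3, map_mul]
      ring
    rw [key]
    exact hj

/-- If a subspace `S ⊆ H_A ⊗ H_B` is spanned by an unextendible product basis (a set
of product vectors such that no nonzero product vector is orthogonal to all of them),
then `S` is strongly unextendible: for every `k ≥ 1`, the orthogonal complement of
`S^{⊗k}` contains no nonzero product vector with respect to the bipartition
`A^{⊗k} | B^{⊗k}`; that is, for every nonzero `u ∈ H_A^{⊗k}` and `v ∈ H_B^{⊗k}` there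
is a `k`-fold tensor product of elements of `S` not orthogonal to `u ⊗ v`. -/
theorem span_UPB_strongly_unextendible {a b m : ℕ}
    (α : Fin m → Fin a → ℂ) (β : Fin m → Fin b → ℂ)
    (hUPB : ∀ (u : Fin a → ℂ) (v : Fin b → ℂ), u ≠ 0 → v ≠ 0 →
      ∃ i, (∑ p : Fin a × Fin b, conj (α i p.1 * β i p.2) * (u p.1 * v p.2)) ≠ 0) :
    ∀ k : ℕ, 1 ≤ k →
      ∀ (u : (Fin k → Fin a) → ℂ) (v : (Fin k → Fin b) → ℂ), u ≠ 0 → v ≠ 0 →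
        ∃ w : Fin k → (Fin a × Fin b → ℂ),
          (∀ i, w i ∈ Submodule.span ℂ
            (Set.range fun i' : Fin m => fun p : Fin a × Fin b => α i' p.1 * β i' p.2)) ∧
          (∑ f : Fin k → Fin a × Fin b,
            conj (∏ i, w i (f i)) *
              (u (fun i => (f i).1) * v (fun i => (f i).2))) ≠ 0 := by
  intro k _ u v hu hv
  obtain ⟨j, hj⟩ := upb_pow α β hUPB k u v hu hv
  refine ⟨fun i => fun p => α (j i) p.1 * β (j i) p.2, fun i => ?_, hj⟩
  exact Submodule.subset_span ⟨j i, rfl⟩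
end
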